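/- Let n ≥ 2 and let f be a Schwartz function on ℝ^{1+n} whose Fourier transform f̂ vanishes at every (τ,ξ) with ξ ≠ 0 and |τ| ≤ |ξ| (i.e., f̂ is supported, away from 0, in the open time-like cone {τ² > |ξ|²}). Then Lf(z,θ) = 0 for all z ∈ ℝ^n and θ ∈ S^{n-1}. (This is the exact, Fourier-support version of the statement that time-like singularities are invisible to the light ray transform: WF(f) ⊆ Γ^{tm} implies WF(Nf) = ∅.) -/

import Mathlib

open MeasureTheory Real FourierTransform
open scoped RealInnerProductSpace

set_option maxHeartbeats 1000000 in
/-- If `f` is Schwartz on `ℝ^{1+n}` and its Fourier transform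
`f̂(τ,ξ) = ∫ e^{-i(tτ + x·ξ)} f dt dx` vanishes at every `(τ,ξ)` with `ξ ≠ 0` and
`|τ| ≤ |ξ|` (so `f̂` is supported, away from `0`, in the open time-like cone), then the
light ray transform `Lf(z,θ) = ∫ f(s, z+sθ) ds` vanishes identically: time-like
singularities are invisible to the light ray transform. -/
theorem timelike_fourier_support_implies_light_ray_vanishes
    (n : ℕ) (hn : 2 ≤ n)
    (f : SchwartzMap (ℝ × EuclideanSpace ℝ (Fin n)) ℂ)
    (hhat : ∀ (τ : ℝ) (ξ : EuclideanSpace ℝ (Fin n)), ξ ≠ 0 → |τ| ≤ ‖ξ‖ →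
      (∫ w : ℝ × EuclideanSpace ℝ (Fin n),
          Complex.exp (-(Complex.I * ((w.1 * τ + inner ℝ w.2 ξ : ℝ) : ℂ))) * f w) = 0) :
    ∀ (z θ : EuclideanSpace ℝ (Fin n)), ‖θ‖ = 1 →
      (∫ s : ℝ, f (s, z + s • θ)) = 0 := by
  intro z θ hθ
  haveI : (volume : Measure (ℝ × EuclideanSpace ℝ (Fin n))).HasTemperateGrowth := by
    rw [Measure.volume_eq_prod]
    exact MeasureTheory.Measure.IsAddHaarMeasure.instHasTemperateGrowth
  -- the sheared function and its integrability
  have hA : MeasurePreserving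
      (fun p : ℝ × EuclideanSpace ℝ (Fin n) => (p.1, p.2 + p.1 • θ))
      ((volume : Measure ℝ).prod (volume : Measure (EuclideanSpace ℝ (Fin n))))
      ((volume : Measure ℝ).prod (volume : Measure (EuclideanSpace ℝ (Fin n)))) := by
    refine (MeasurePreserving.id (volume : Measure ℝ)).skew_product
      (g := fun (a : ℝ) (c : EuclideanSpace ℝ (Fin n)) => c + a • θ)
      ((continuous_snd.add (continuous_fst.smul continuous_const)).measurable) ?_
    exact ae_of_all _ fun a => (measurePreserving_add_right volume (a • θ)).map_eq
  have hfInt : Integrable (fun p : ℝ × EuclideanSpace ℝ (Fin n) => (f p : ℂ))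
      ((volume : Measure ℝ).prod (volume : Measure (EuclideanSpace ℝ (Fin n)))) := by
    rw [← Measure.volume_eq_prod]; exact f.integrable
  have hFint : Integrable
      (fun p : ℝ × EuclideanSpace ℝ (Fin n) => (f (p.1, p.2 + p.1 • θ) : ℂ))
      ((volume : Measure ℝ).prod (volume : Measure (EuclideanSpace ℝ (Fin n)))) :=
    (hA.integrable_comp hfInt.aestronglyMeasurable).mpr hfInt
  -- decay bound
  obtain ⟨C0, -, hC0⟩ := f.decay 0 0
  obtain ⟨C2, -, hC2⟩ := f.decay 2 0
  have hbound : ∀ p : ℝ × EuclideanSpace ℝ (Fin n),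
      ‖f p‖ ≤ (C0 + C2) * (1 + p.1 ^ 2)⁻¹ := by
    intro p
    have h0 := hC0 p
    have h2 := hC2 p
    rw [norm_iteratedFDeriv_zero] at h0 h2
    have hp1 : |p.1| ≤ ‖p‖ := norm_fst_le p
    have hsq : p.1 ^ 2 ≤ ‖p‖ ^ 2 := by
      nlinarith [abs_nonneg p.1, norm_nonneg p, sq_abs p.1]
    have hkey : (1 + p.1 ^ 2) * ‖f p‖ ≤ C0 + C2 := by
      simp only [pow_zero, one_mul] at h0
      nlinarith [norm_nonneg (f p)]
    have hpos : (0 : ℝ) < 1 + p.1 ^ 2 := by positivity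
    rw [← le_div_iff₀' hpos] at hkey
    simpa [div_eq_mul_inv, mul_comm] using hkey
  have hboundint : Integrable (fun s : ℝ => (C0 + C2) * (1 + s ^ 2)⁻¹) := by
    simpa [sq] using (integrable_inv_one_add_sq).const_mul (C0 + C2)
  -- the averaged function g
  set g : EuclideanSpace ℝ (Fin n) → ℂ := fun x => ∫ s : ℝ, f (s, x + s • θ) with hgdef
  have hgcont : Continuous g := by
    apply continuous_of_dominated (bound := fun s : ℝ => (C0 + C2) * (1 + s ^ 2)⁻¹)
    · intro x
      exact (f.continuous.comp (continuous_id.prodMk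
        (continuous_const.add (continuous_id.smul continuous_const)))).aestronglyMeasurable
    · intro x
      filter_upwards with s
      exact hbound (s, x + s • θ)
    · exact hboundint
    · filter_upwards with s
      exact f.continuous.comp ((continuous_const (y := s)).prodMk
        (continuous_id.add continuous_const))
  have hgint : Integrable g := hFint.integral_prod_right
  -- Fourier transform of g vanishes away from 0
  have key : ∀ ξ : EuclideanSpace ℝ (Fin n), ξ ≠ 0 → 𝓕 g ξ = 0 := by
    intro ξ hξ
    have hinnercont : Continuous fun x : EuclideanSpace ℝ (Fin n) => ⟪x, ξ⟫ :=
      (continuous_inner (𝕜 := ℝ)).comp (continuous_id.prodMk continuous_const)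
    have hΦint : Integrable (fun p : ℝ × EuclideanSpace ℝ (Fin n) =>
        Complex.exp ((↑(-2 * π * ⟪p.2, ξ⟫) * Complex.I)) • (f (p.1, p.2 + p.1 • θ) : ℂ))
        ((volume : Measure ℝ).prod (volume : Measure (EuclideanSpace ℝ (Fin n)))) := by
      refine hFint.norm.mono' ?_ (ae_of_all _ fun p => ?_)
      · exact (Complex.continuous_exp.comp
          ((Complex.continuous_ofReal.comp
            ((continuous_const.mul (hinnercont.comp continuous_snd)))).mul
            continuous_const)).aestronglyMeasurable.smul hFint.aestronglyMeasurable
      · rw [norm_smul, Complex.norm_exp]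
        simp
    have hΨint : Integrable (fun p : ℝ × EuclideanSpace ℝ (Fin n) =>
        Complex.exp ((↑(-2 * π * ⟪p.2 - p.1 • θ, ξ⟫) * Complex.I)) • (f p : ℂ))
        ((volume : Measure ℝ).prod (volume : Measure (EuclideanSpace ℝ (Fin n)))) := by
      refine hfInt.norm.mono' ?_ (ae_of_all _ fun p => ?_)
      · exact (Complex.continuous_exp.comp
          ((Complex.continuous_ofReal.comp
            ((continuous_const.mul (hinnercont.comp
              (continuous_snd.sub (continuous_fst.smul continuous_const)))))).mul
            continuous_const)).aestronglyMeasurable.smul hfInt.aestronglyMeasurable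
      · rw [norm_smul, Complex.norm_exp]
        simp
    have step1 : 𝓕 g ξ = ∫ x : EuclideanSpace ℝ (Fin n), ∫ s : ℝ,
        Complex.exp ((↑(-2 * π * ⟪x, ξ⟫) * Complex.I)) • (f (s, x + s • θ) : ℂ) := by
      rw [Real.fourier_eq']
      congr 1
      ext x
      rw [hgdef]
      exact (integral_smul _ _).symm
    have step2 : (∫ x : EuclideanSpace ℝ (Fin n), ∫ s : ℝ,
        Complex.exp ((↑(-2 * π * ⟪x, ξ⟫) * Complex.I)) • (f (s, x + s • θ) : ℂ))
        = ∫ s : ℝ, ∫ x : EuclideanSpace ℝ (Fin n),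
        Complex.exp ((↑(-2 * π * ⟪x, ξ⟫) * Complex.I)) • (f (s, x + s • θ) : ℂ) :=
      (integral_integral_swap (f := fun s x =>
        Complex.exp ((↑(-2 * π * ⟪x, ξ⟫) * Complex.I)) • (f (s, x + s • θ) : ℂ)) hΦint).symm
    have step3 : ∀ s : ℝ, (∫ x : EuclideanSpace ℝ (Fin n),
        Complex.exp ((↑(-2 * π * ⟪x, ξ⟫) * Complex.I)) • (f (s, x + s • θ) : ℂ))
        = ∫ x : EuclideanSpace ℝ (Fin n),
          Complex.exp ((↑(-2 * π * ⟪x - s • θ, ξ⟫) * Complex.I)) • (f (s, x) : ℂ) := by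
      intro s
      rw [← integral_add_right_eq_self
        (fun x : EuclideanSpace ℝ (Fin n) =>
          Complex.exp ((↑(-2 * π * ⟪x - s • θ, ξ⟫) * Complex.I)) • (f (s, x) : ℂ))
        (s • θ)]
      simp
    have step4 : (∫ s : ℝ, ∫ x : EuclideanSpace ℝ (Fin n),
        Complex.exp ((↑(-2 * π * ⟪x - s • θ, ξ⟫) * Complex.I)) • (f (s, x) : ℂ))
        = ∫ p : ℝ × EuclideanSpace ℝ (Fin n),
          Complex.exp ((↑(-2 * π * ⟪p.2 - p.1 • θ, ξ⟫) * Complex.I)) • (f p : ℂ) :=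
      integral_integral (f := fun s x =>
        Complex.exp ((↑(-2 * π * ⟪x - s • θ, ξ⟫) * Complex.I)) • (f (s, x) : ℂ)) hΨint
    have hmatch : (∫ p : ℝ × EuclideanSpace ℝ (Fin n),
        Complex.exp ((↑(-2 * π * ⟪p.2 - p.1 • θ, ξ⟫) * Complex.I)) • (f p : ℂ))
        = ∫ w : ℝ × EuclideanSpace ℝ (Fin n), Complex.exp (-(Complex.I *
            ((w.1 * (-(2 * π * ⟪θ, ξ⟫)) + inner ℝ w.2 ((2 * π) • ξ) : ℝ) : ℂ))) * f w := by
      congr 1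
      ext p
      rw [smul_eq_mul]
      congr 1
      have h1 : ⟪p.2 - p.1 • θ, ξ⟫ = ⟪p.2, ξ⟫ - p.1 * ⟪θ, ξ⟫ := by
        rw [inner_sub_left, real_inner_smul_left]
      have h2 : (inner ℝ p.2 ((2 * π) • ξ) : ℝ) = 2 * π * ⟪p.2, ξ⟫ := real_inner_smul_right _ _ _
      rw [h1, h2]
      push_cast
      ring
    have hzero : (∫ w : ℝ × EuclideanSpace ℝ (Fin n), Complex.exp (-(Complex.I *
        ((w.1 * (-(2 * π * ⟪θ, ξ⟫)) + inner ℝ w.2 ((2 * π) • ξ) : ℝ) : ℂ))) * f w) = 0 := by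
      apply hhat
      · exact smul_ne_zero (by positivity) hξ
      · rw [norm_smul]
        have habs : |(-(2 * π * ⟪θ, ξ⟫))| = 2 * π * |⟪θ, ξ⟫| := by
          rw [abs_neg, abs_mul]
          congr 1
          rw [abs_of_pos (by positivity)]
        rw [habs]
        have hcs : |⟪θ, ξ⟫| ≤ ‖θ‖ * ‖ξ‖ := abs_real_inner_le_norm θ ξ
        rw [hθ, one_mul] at hcs
        have h2π : ‖(2 * π : ℝ)‖ = 2 * π := by
          rw [Real.norm_eq_abs, abs_of_pos (by positivity)]
        rw [h2π]
        nlinarith [Real.pi_pos]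
    rw [step1, step2]
    simp_rw [step3]
    rw [step4, hmatch, hzero]
  -- 𝓕 g is continuous and vanishes a.e., hence everywhere
  have hFcont : Continuous (𝓕 g) :=
    VectorFourier.fourierIntegral_continuous Real.continuous_fourierChar
      (by exact continuous_inner (𝕜 := ℝ)) hgint
  have hFzero : 𝓕 g = 0 := by
    have hae : 𝓕 g =ᵐ[volume] (0 : EuclideanSpace ℝ (Fin n) → ℂ) := by
      haveI : Nontrivial (EuclideanSpace ℝ (Fin n)) := by
        refine ⟨0, EuclideanSpace.single (⟨0, by omega⟩ : Fin n) (1 : ℝ), fun h => ?_⟩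
        have := congrArg (fun v : EuclideanSpace ℝ (Fin n) => v ⟨0, by omega⟩) h
        simp [EuclideanSpace.single_apply] at this
      haveI : NoAtoms (volume : Measure (EuclideanSpace ℝ (Fin n))) :=
        MeasureTheory.Measure.IsAddHaarMeasure.nullSingletonClass volume
      have h0 : (volume : Measure (EuclideanSpace ℝ (Fin n))) {0} = 0 := measure_singleton 0
      rw [Filter.EventuallyEq, ae_iff]
      refine measure_mono_null (fun x hx => ?_) h0
      simp only [Set.mem_setOf_eq] at hx
      by_contra hx0
      exact hx (by simpa using key x (by simpa using hx0))
    exact (hFcont.ae_eq_iff_eq volume continuous_const).mp hae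
  -- Fourier inversion
  have hz : g z = 0 := by
    have hinv := hgint.fourierInv_fourier_eq (v := z)
      (by rw [hFzero]; exact integrable_zero _ _ _) hgcont.continuousAt
    rw [← hinv, hFzero]
    simp [Real.fourierInv_eq]
  simpa [hgdef] using hz
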